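/- Let (L, [·,·], α, β) be a regular BiHom-Lie algebra and fix integers s, t. Define ad_{s,t}(u)(v) = [α^s β^t(u), v]. Then ad_{s,t}: L → End(L) together with the maps α, β defines a representation of L on itself, i.e. ad_{s,t}(α(u))∘α = α∘ad_{s,t}(u), ad_{s,t}(β(u))∘β = β∘ad_{s,t}(u), and ad_{s,t}([β(u), v])∘β = ad_{s,t}(αβ(u))∘ad_{s,t}(v) − ad_{s,t}(β(v))∘ad_{s,t}(α(u)) for all u, v ∈ L. -/

import Mathlib

/-- The `αˢβᵗ`-adjoint action `ad_{s,t}(u)(v) = [αˢβᵗ(u), v]` defines a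
representation of a regular BiHom-Lie algebra on itself. -/
theorem stmt_15 {K : Type*} [Field K] {L : Type*} [AddCommGroup L] [Module K L]
(br : L →ₗ[K] L →ₗ[K] L) (α β : L ≃ₗ[K] L)
    (hcomm : ∀ a, α (β a) = β (α a))
    (hαm : ∀ a b, α (br a b) = br (α a) (α b))
    (hβm : ∀ a b, β (br a b) = br (β a) (β b))
    (hskew : ∀ a a', br (β a) (α a') = - br (β a') (α a))
    (hjac : ∀ a a' a'', br (β (β a)) (br (β a') (α a''))
      + br (β (β a')) (br (β a'') (α a))
      + br (β (β a'')) (br (β a) (α a')) = 0)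
    (s t : ℤ) (ad : L → L → L)
    (had : ∀ u v, ad u v = br ((α ^ s * β ^ t) u) v) :
    (∀ u v, ad (α u) (α v) = α (ad u v)) ∧
    (∀ u v, ad (β u) (β v) = β (ad u v)) ∧
    (∀ u v w, ad (br (β u) v) (β w) = ad (α (β u)) (ad v w) - ad (β v) (ad (α u) w)) := by
  set γ : L ≃ₗ[K] L := α ^ s * β ^ t with hγdef
  -- inverses of bracket morphisms are bracket morphisms
  have hmorInv : ∀ e : L ≃ₗ[K] L, (∀ a b, e (br a b) = br (e a) (e b)) →
      ∀ a b, e⁻¹ (br a b) = br (e⁻¹ a) (e⁻¹ b) := by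
    intro e he a b
    apply e.injective
    have hinv : ∀ x, e (e⁻¹ x) = x := fun x => by
      have h1 : e * e⁻¹ = 1 := mul_inv_cancel e
      calc e (e⁻¹ x) = (e * e⁻¹) x := rfl
        _ = x := by rw [h1]; rfl
    rw [hinv, he, hinv, hinv]
  -- integer powers of bracket morphisms are bracket morphisms
  have hzpow : ∀ e : L ≃ₗ[K] L, (∀ a b, e (br a b) = br (e a) (e b)) →
      ∀ (n : ℤ) (a b : L), (e ^ n) (br a b) = br ((e ^ n) a) ((e ^ n) b) := by
    intro e he n
    induction n using Int.induction_on with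
    | zero => intro a b; rfl
    | succ n ih =>
      intro a b
      calc (e ^ ((n : ℤ) + 1)) (br a b) = (e ^ (n : ℤ) * e) (br a b) := by
            rw [zpow_add_one]
        _ = (e ^ (n : ℤ)) (e (br a b)) := rfl
        _ = (e ^ (n : ℤ)) (br (e a) (e b)) := by rw [he]
        _ = br ((e ^ (n : ℤ)) (e a)) ((e ^ (n : ℤ)) (e b)) := ih _ _
        _ = br ((e ^ ((n : ℤ) + 1)) a) ((e ^ ((n : ℤ) + 1)) b) := by
            rw [zpow_add_one]; rfl
    | pred n ih =>
      intro a b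
      calc (e ^ (-(n : ℤ) - 1)) (br a b) = (e ^ (-(n : ℤ)) * e⁻¹) (br a b) := by
            rw [zpow_sub_one]
        _ = (e ^ (-(n : ℤ))) (e⁻¹ (br a b)) := rfl
        _ = (e ^ (-(n : ℤ))) (br (e⁻¹ a) (e⁻¹ b)) := by rw [hmorInv e he]
        _ = br ((e ^ (-(n : ℤ))) (e⁻¹ a)) ((e ^ (-(n : ℤ))) (e⁻¹ b)) := ih _ _
        _ = br ((e ^ (-(n : ℤ) - 1)) a) ((e ^ (-(n : ℤ) - 1)) b) := by
            rw [zpow_sub_one]; rfl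
  -- γ is a bracket morphism
  have hγm : ∀ a b, γ (br a b) = br (γ a) (γ b) := by
    intro a b
    show (α ^ s) ((β ^ t) (br a b)) = _
    rw [hzpow β hβm, hzpow α hαm]; rfl
  -- commutation facts
  have hc : Commute α β := LinearEquiv.ext hcomm
  have hcαγ : Commute α γ := ((Commute.refl α).zpow_right s).mul_right (hc.zpow_right t)
  have hcβγ : Commute β γ := (hc.symm.zpow_right s).mul_right ((Commute.refl β).zpow_right t)
  have hγα : ∀ a, γ (α a) = α (γ a) := by
    intro a
    have h := congrArg (fun g : L ≃ₗ[K] L => g a) hcαγ.eq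
    exact h.symm
  have hγβ : ∀ a, γ (β a) = β (γ a) := by
    intro a
    have h := congrArg (fun g : L ≃ₗ[K] L => g a) hcβγ.eq
    exact h.symm
  -- auxiliary commutation with inverses
  have hαsymmβ : ∀ z, α.symm (β z) = β (α.symm z) := by
    intro z
    apply α.injective
    rw [α.apply_symm_apply, hcomm, α.apply_symm_apply]
  have hβαβsymm : ∀ z, β (α (β.symm z)) = α z := by
    intro z
    rw [← hcomm, β.apply_symm_apply]
  -- key representation identity for the adjoint action
  have key : ∀ x y w : L, br (br (β x) y) (β w)
      = br (α (β x)) (br y w) - br (β y) (br (α x) w) := by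
    intro x y w
    have h := hjac (α (β.symm x)) (β.symm y) (α.symm w)
    -- simplify the three Jacobi terms
    have e1 : β (β (α (β.symm x))) = α (β x) := by rw [hβαβsymm, hcomm]
    have e2 : β (β.symm y) = y := β.apply_symm_apply y
    have e3 : α (α.symm w) = w := α.apply_symm_apply w
    rw [e1, e2, e3] at h
    -- second term
    have hT2 : br (β (α.symm w)) (α (α (β.symm x))) = - br (α x) w := by
      rw [hskew (α.symm w) (α (β.symm x)), hβαβsymm, α.apply_symm_apply]
    rw [hT2] at h
    -- third term
    have hT3 : br (β (β (α.symm w))) (br (β (α (β.symm x))) (α (β.symm y)))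
        = - br (br (β x) y) (β w) := by
      have h1 : br (β x) y = β (br x (β.symm y)) := by
        rw [hβm, β.apply_symm_apply]
      have h2 : β w = α (α.symm (β w)) := (α.apply_symm_apply _).symm
      rw [h1, h2, hskew (br x (β.symm y)) (α.symm (β w)), hαm, hβαβsymm, hαsymmβ, neg_neg]
    rw [hT3] at h
    rw [(br _).map_neg] at h
    -- rearrange
    have h' : (br (α (β x)) (br y w) - br (β y) (br (α x) w)) - br (br (β x) y) (β w) = 0 := by
      rw [sub_eq_add_neg, sub_eq_add_neg]; exact h
    exact (eq_of_sub_eq_zero h').symm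
  refine ⟨?_, ?_, ?_⟩
  · intro u v
    rw [had, had, hγα, ← hαm]
  · intro u v
    rw [had, had, hγβ, ← hβm]
  · intro u v w
    rw [had, had, had, had, had, hγm, hγβ, hγα, hγβ, hγα, hγβ]
    exact key (γ u) (γ v) w
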